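/- arXiv:1802.00083 — 3 statements merged into one kernel-verified Lean document; each statement's English description precedes it below -/
import Mathlib

section
/- For all real numbers α, β and all (w,z) ∈ ℂ × ℂ⁴, one has r(Γ_{α,β}(w,z)) = e^{4β} · r(w,z). In particular, the linear map Γ_{α,β} maps M := r⁻¹(0) bijectively onto itself. -/
open ComplexConjugate

/-- `r(w,z₁,z₂,z₃,z₄) = Im w − (z₁ conj z₂ + z₂ conj z₁ + z₃ conj z₄ + z₄ conj z₃) − |z₁|⁴`. -/
noncomputable def rdef : ℂ × ℂ × ℂ × ℂ × ℂ → ℝ := fun p =>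
  p.1.im
    - (p.2.1 * conj p.2.2.1 + p.2.2.1 * conj p.2.1
        + p.2.2.2.1 * conj p.2.2.2.2 + p.2.2.2.2 * conj p.2.2.2.1).re
    - ‖p.2.1‖ ^ 4

/-- `M = r⁻¹(0)`. -/
noncomputable def Mdef : Set (ℂ × ℂ × ℂ × ℂ × ℂ) := rdef ⁻¹' {0}

/-- `Γ_{α,β}(w,z₁,z₂,z₃,z₄) = (e^{4β}w, e^{β}z₁, e^{3β}z₂, e^{4β−α}z₃, e^{α}z₄)`. -/
noncomputable def Γdef (α β : ℝ) : ℂ × ℂ × ℂ × ℂ × ℂ → ℂ × ℂ × ℂ × ℂ × ℂ := fun p =>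
  ((Real.exp (4 * β) : ℂ) * p.1, (Real.exp β : ℂ) * p.2.1,
    (Real.exp (3 * β) : ℂ) * p.2.2.1, (Real.exp (4 * β - α) : ℂ) * p.2.2.2.1,
    (Real.exp α : ℂ) * p.2.2.2.2)

lemma rkey (α β : ℝ) (p : ℂ × ℂ × ℂ × ℂ × ℂ) :
    rdef (Γdef α β p) = Real.exp (4 * β) * rdef p := by
  obtain ⟨w, z1, z2, z3, z4⟩ := p
  have key : ∀ (a b : ℝ) (u v : ℂ), a * b = Real.exp (4 * β) →
      ((a : ℂ) * u) * conj ((b : ℂ) * v) = (Real.exp (4 * β) : ℂ) * (u * conj v) := by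
    intro a b u v h
    rw [map_mul, Complex.conj_ofReal, ← h]; push_cast; ring
  have h1 : Real.exp β * Real.exp (3 * β) = Real.exp (4 * β) := by
    rw [← Real.exp_add]; ring_nf
  have h1' : Real.exp (3 * β) * Real.exp β = Real.exp (4 * β) := by
    rw [mul_comm]; exact h1
  have h2 : Real.exp (4 * β - α) * Real.exp α = Real.exp (4 * β) := by
    rw [← Real.exp_add]; ring_nf
  have h2' : Real.exp α * Real.exp (4 * β - α) = Real.exp (4 * β) := by
    rw [mul_comm]; exact h2
  have habs : ‖(Real.exp β : ℂ) * z1‖ ^ 4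
      = Real.exp (4 * β) * ‖z1‖ ^ 4 := by
    rw [norm_mul, Complex.norm_real, Real.norm_eq_abs, abs_of_pos (Real.exp_pos _), mul_pow,
      ← Real.exp_nat_mul]
    norm_num [mul_comm]
  simp only [rdef, Γdef]
  rw [key _ _ _ _ h1, key _ _ _ _ h1', key _ _ _ _ h2, key _ _ _ _ h2', habs,
    ← mul_add, ← mul_add, ← mul_add, Complex.re_ofReal_mul]
  simp only [Complex.mul_im, Complex.ofReal_re, Complex.ofReal_im]
  ring

lemma ginv (α β : ℝ) (p : ℂ × ℂ × ℂ × ℂ × ℂ) :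
    Γdef α β (Γdef (-α) (-β) p) = p := by
  obtain ⟨w, z1, z2, z3, z4⟩ := p
  simp only [Γdef, ← mul_assoc, ← Complex.ofReal_mul, ← Real.exp_add]
  norm_num

/-- `r ∘ Γ_{α,β} = e^{4β} r`; in particular `Γ_{α,β}` maps `M = r⁻¹(0)` bijectively
onto itself. -/
theorem stmt_1 (α β : ℝ) :
    (∀ p : ℂ × ℂ × ℂ × ℂ × ℂ, rdef (Γdef α β p) = Real.exp (4 * β) * rdef p) ∧
      Set.BijOn (Γdef α β) Mdef Mdef := by
  refine ⟨rkey α β, ?_, ?_, ?_⟩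
  · intro p hp
    simp only [Mdef, Set.mem_preimage, Set.mem_singleton_iff] at hp ⊢
    rw [rkey, hp, mul_zero]
  · intro p _ q _ h
    have := congrArg (Γdef (-α) (-β)) h
    have e1 := ginv (-α) (-β) p
    have e2 := ginv (-α) (-β) q
    simp only [neg_neg] at e1 e2
    rwa [e1, e2] at this
  · intro q hq
    refine ⟨Γdef (-α) (-β) q, ?_, ginv α β q⟩
    simp only [Mdef, Set.mem_preimage, Set.mem_singleton_iff] at hq ⊢
    rw [rkey, hq, mul_zero]
end

section
/- For all α, β ∈ ℝ, all p ∈ ℂ⁵, and all v ∈ ℂ⁵, one has θ_{Γ_{α,β}(p)}(Γ_{α,β}(v)) = e^{4β} · θ_p(v); that is, the linear maps Γ_{α,β} act by homotheties of the contact form θ = Re(i∂r). -/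
open ComplexConjugate

/-- The contact form `θ = Re(i∂r)` at `p = (w,z₁,z₂,z₃,z₄)` evaluated on
`v = (v₀,v₁,v₂,v₃,v₄)`:
`θ_p(v) = Re(v₀/2 − i(conj z₂ + 2z₁|z₁|²)v₁ − i conj z₁ v₂ − i conj z₄ v₃ − i conj z₃ v₄)`. -/
noncomputable def θdef (p v : ℂ × ℂ × ℂ × ℂ × ℂ) : ℝ :=
  (v.1 / 2
    - Complex.I * (conj p.2.2.1 + 2 * p.2.1 * (‖p.2.1‖ : ℂ) ^ 2) * v.2.1
    - Complex.I * conj p.2.1 * v.2.2.1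
    - Complex.I * conj p.2.2.2.2 * v.2.2.2.1
    - Complex.I * conj p.2.2.2.1 * v.2.2.2.2).re

/-- The linear maps `Γ_{α,β}` act by homotheties of the contact form `θ`:
`θ_{Γ(p)}(Γ(v)) = e^{4β} θ_p(v)`. -/
theorem stmt_8 (α β : ℝ) (p v : ℂ × ℂ × ℂ × ℂ × ℂ) :
    θdef (Γdef α β p) (Γdef α β v) = Real.exp (4 * β) * θdef p v := by
  simp only [θdef, Γdef, map_mul, Complex.conj_ofReal, norm_mul,
    Complex.norm_real, Real.norm_eq_abs, abs_of_pos (Real.exp_pos β)]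
  simp only [show (4:ℝ)*β = β+β+β+β by ring, show (3:ℝ)*β = β+β+β by ring,
    Real.exp_add, Real.exp_sub]
  simp only [← Complex.ofReal_pow]
  simp only [Complex.ext_iff, Complex.add_re, Complex.sub_re, Complex.mul_re, Complex.mul_im,
    Complex.add_im, Complex.sub_im, Complex.div_re, Complex.div_im, Complex.I_re, Complex.I_im,
    Complex.ofReal_re, Complex.ofReal_im, Complex.conj_re, Complex.conj_im,
    Complex.normSq_apply,
    Complex.re_ofNat, Complex.im_ofNat]
  field_simp
  ring
end

section
/- Let X be a topological space equipped with its Borel σ-algebra, let μ be a finite Borel measure on X, and let (φ_t)_{t ∈ ℝ} be a family of Borel measurable maps φ_t : X → X each preserving μ, i.e. μ(φ_t⁻¹(S)) = μ(S) for every Borel set S and every t. Suppose A ⊆ X is a set such that for every x ∈ X and every open set V ⊇ A, there exists T ∈ ℝ with φ_t(x) ∈ V for all t ≥ T. Then μ(U) = 0 for every open set U ⊆ X whose closure is disjoint from A. In particular, if some nonempty open set has closure disjoint from A, then μ is not positive on all nonempty open sets. -/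
open MeasureTheory Filter Topology Set

/-- If `μ` is a finite Borel measure on `X` preserved by every map `φ_t` of a
family `(φ_t)_{t∈ℝ}` of Borel measurable maps, and `A ⊆ X` attracts every orbit
(for every `x` and every open `V ⊇ A` one has `φ_t(x) ∈ V` for all sufficiently
large `t`), then `μ(U) = 0` for every open `U` whose closure is disjoint from
`A`.  In particular, if some nonempty open set has closure disjoint from `A`,
then `μ` is not positive on all nonempty open sets. -/
theorem stmt_15 {X : Type*} [TopologicalSpace X] [MeasurableSpace X] [BorelSpace X]
    (μ : Measure X) [IsFiniteMeasure μ]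
    (φ : ℝ → X → X) (hmeas : ∀ t : ℝ, Measurable (φ t))
    (hpres : ∀ t : ℝ, ∀ S : Set X, MeasurableSet S → μ (φ t ⁻¹' S) = μ S)
    (A : Set X)
    (hattr : ∀ x : X, ∀ V : Set X, IsOpen V → A ⊆ V → ∃ T : ℝ, ∀ t ≥ T, φ t x ∈ V) :
    (∀ U : Set X, IsOpen U → closure U ∩ A = ∅ → μ U = 0) ∧
    ((∃ U : Set X, IsOpen U ∧ U.Nonempty ∧ closure U ∩ A = ∅) →
      ¬ ∀ U : Set X, IsOpen U → U.Nonempty → 0 < μ U) := by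
  have main : ∀ U : Set X, IsOpen U → closure U ∩ A = ∅ → μ U = 0 := by
    intro U hU hcl
    set V : Set X := (closure U)ᶜ with hV
    have hVopen : IsOpen V := isClosed_closure.isOpen_compl
    have hAV : A ⊆ V := by
      intro a ha hca
      exact absurd (mem_inter hca ha) (by simp [hcl])
    have hVU : V ⊆ Uᶜ := compl_subset_compl.2 subset_closure
    set C : ℕ → Set X := fun n => ⋂ (m : ℕ) (_ : n ≤ m), φ (m : ℝ) ⁻¹' Uᶜ with hC
    have hCmeas : ∀ n, MeasurableSet (C n) := by
      intro n
      exact MeasurableSet.iInter fun m => MeasurableSet.iInter fun _ =>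
        hmeas _ (hU.measurableSet.compl)
    have hCmono : Monotone C := by
      intro n k hnk
      intro x hx
      exact Set.mem_iInter₂.2 fun m hm => Set.mem_iInter₂.1 hx m (le_trans hnk hm)
    have hCunion : (⋃ n, C n) = univ := by
      apply eq_univ_of_forall
      intro x
      obtain ⟨T, hT⟩ := hattr x V hVopen hAV
      refine mem_iUnion.2 ⟨⌈T⌉₊, ?_⟩
      refine mem_iInter₂.2 fun m hm => ?_
      have : (T : ℝ) ≤ (m : ℝ) :=
        le_trans (Nat.le_ceil T) (by exact_mod_cast Nat.cast_le.2 hm)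
      exact hVU (hT _ this)
    have htend : Tendsto (fun n => μ (C n)) atTop (𝓝 (μ univ)) := by
      have := tendsto_measure_iUnion_atTop (μ := μ) hCmono
      rwa [hCunion] at this
    -- for each n, μ (C n) + μ U ≤ μ univ
    have hbound : ∀ n : ℕ, μ (C n) + μ U ≤ μ univ := by
      intro n
      have hsub : C n ⊆ φ (n : ℝ) ⁻¹' Uᶜ := by
        intro x hx
        exact mem_iInter₂.1 hx n le_rfl
      have hdisj : Disjoint (C n) (φ (n : ℝ) ⁻¹' U) := by
        refine Set.disjoint_left.2 fun x hx hx' => ?_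
        exact hsub hx hx'
      have hUmeas := hU.measurableSet
      calc μ (C n) + μ U = μ (C n) + μ (φ (n : ℝ) ⁻¹' U) := by
            rw [hpres (n : ℝ) U hUmeas]
        _ = μ (C n ∪ φ (n : ℝ) ⁻¹' U) :=
            (measure_union hdisj (hmeas _ hUmeas)).symm
        _ ≤ μ univ := measure_mono (subset_univ _)
    have htend' : Tendsto (fun n => μ (C n) + μ U) atTop (𝓝 (μ univ + μ U)) :=
      htend.add tendsto_const_nhds
    have hle : μ univ + μ U ≤ μ univ + 0 := by
      simpa using le_of_tendsto htend' (Eventually.of_forall hbound)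
    have := ENNReal.le_of_add_le_add_left (measure_ne_top μ univ) hle
    exact le_antisymm this zero_le
  refine ⟨main, ?_⟩
  rintro ⟨U, hU, hne, hcl⟩ hpos
  have := hpos U hU hne
  rw [main U hU hcl] at this
  exact lt_irrefl 0 this
end
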